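/- Let A, B ∈ M_n(ℝ₊) and 1 ≤ k ≤ n. Then W_max^k(A ⊕ B) ⊆ W_max^k(A) ⊕ W_max^k(B), where for sets S, T ⊆ ℝ₊ one puts S ⊕ T = { max{s,t} : s ∈ S, t ∈ T }. Moreover, for k = n equality holds: W_max^n(A ⊕ B) = W_max^n(A) ⊕ W_max^n(B). -/

import Mathlib

open Matrix

/-- Max-algebra matrix product: `(A ⊗ B) i j = max_p (A i p * B p j)`. -/
noncomputable def maxMul {n m l : ℕ} (A : Matrix (Fin n) (Fin m) ℝ)
    (B : Matrix (Fin m) (Fin l) ℝ) : Matrix (Fin n) (Fin l) ℝ :=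
  Matrix.of fun i j => ⨆ p, A i p * B p j

/-- Max trace: `tr⊗(A) = max_i A i i`. -/
noncomputable def trMax {n : ℕ} (A : Matrix (Fin n) (Fin n) ℝ) : ℝ := ⨆ i, A i i

/-- The set 𝒳_{n×k} of nonnegative `n×k` matrices with `Xᵀ ⊗ X = I_k`. -/
def Xset (n k : ℕ) : Set (Matrix (Fin n) (Fin k) ℝ) :=
  {X | (∀ i j, 0 ≤ X i j) ∧ maxMul Xᵀ X = 1}

/-- The max `k`-numerical range `W_max^k(A) = { tr⊗(Xᵀ⊗A⊗X) : X ∈ 𝒳_{n×k} }`. -/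
noncomputable def Wmax {n : ℕ} (k : ℕ) (A : Matrix (Fin n) (Fin n) ℝ) : Set ℝ :=
  {z | ∃ X ∈ Xset n k, z = trMax (maxMul (maxMul Xᵀ A) X)}

lemma ciSup_max' {ι : Type*} [Fintype ι] [Nonempty ι] (f g : ι → ℝ) :
    (⨆ i, max (f i) (g i)) = max (⨆ i, f i) (⨆ i, g i) := by
  apply le_antisymm
  · exact ciSup_le fun i => max_le_max (le_ciSup (Finite.bddAbove_range f) i)
      (le_ciSup (Finite.bddAbove_range g) i)
  · exact max_le (ciSup_mono (Finite.bddAbove_range _) fun i => le_max_left _ _)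
      (ciSup_mono (Finite.bddAbove_range _) fun i => le_max_right _ _)

lemma tval_max {n k : ℕ} (hn : 0 < n) (hk : 0 < k)
    (X : Matrix (Fin n) (Fin k) ℝ) (hX : ∀ i j, 0 ≤ X i j)
    (A B : Matrix (Fin n) (Fin n) ℝ) :
    trMax (maxMul (maxMul Xᵀ (Matrix.of fun i j => max (A i j) (B i j))) X)
      = max (trMax (maxMul (maxMul Xᵀ A) X)) (trMax (maxMul (maxMul Xᵀ B) X)) := by
  haveI : Nonempty (Fin n) := ⟨⟨0, hn⟩⟩
  haveI : Nonempty (Fin k) := ⟨⟨0, hk⟩⟩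
  have h1 : maxMul Xᵀ (Matrix.of fun i j => max (A i j) (B i j))
      = Matrix.of fun i j => max ((maxMul Xᵀ A) i j) ((maxMul Xᵀ B) i j) := by
    ext i j
    simp only [maxMul, of_apply, transpose_apply]
    rw [← ciSup_max']
    congr 1; funext p
    exact mul_max_of_nonneg _ _ (hX p i)
  rw [h1]
  have h2 : maxMul (Matrix.of fun i j => max ((maxMul Xᵀ A) i j) ((maxMul Xᵀ B) i j)) X
      = Matrix.of fun i j => max ((maxMul (maxMul Xᵀ A) X) i j) ((maxMul (maxMul Xᵀ B) X) i j) := by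
    ext i j
    simp only [maxMul, of_apply]
    rw [← ciSup_max']
    congr 1; funext p
    exact max_mul_of_nonneg _ _ (hX p j)
  rw [h2]
  simp only [trMax, of_apply]
  exact ciSup_max' _ _

/-- For `X ∈ 𝒳_{n×n}` (a max-permutation matrix) and nonneg `C`,
`tr⊗(Xᵀ C X) = tr⊗ C`. -/
lemma tval_perm {n : ℕ} (hn : 0 < n) (X : Matrix (Fin n) (Fin n) ℝ)
    (hX : X ∈ Xset n n) (C : Matrix (Fin n) (Fin n) ℝ) (hC : ∀ i j, 0 ≤ C i j) :
    trMax (maxMul (maxMul Xᵀ C) X) = trMax C := by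
  haveI : Nonempty (Fin n) := ⟨⟨0, hn⟩⟩
  obtain ⟨hX0, hX1⟩ := hX
  have hdiag : ∀ i, (⨆ p, X p i * X p i) = 1 := by
    intro i
    have := congrFun (congrFun hX1 i) i
    simpa [maxMul, Matrix.one_apply] using this
  have hoff : ∀ i j, i ≠ j → ∀ p, X p i * X p j = 0 := by
    intro i j hij p
    have h0 : (⨆ p, X p i * X p j) = 0 := by
      have := congrFun (congrFun hX1 i) j
      simpa [maxMul, Matrix.one_apply, hij] using this
    have hle := le_ciSup (Finite.bddAbove_range fun p => X p i * X p j) p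
    rw [h0] at hle
    exact le_antisymm hle (mul_nonneg (hX0 p i) (hX0 p j))
  have hcol : ∀ i, ∃ p, X p i = 1 := by
    intro i
    obtain ⟨p, hp⟩ := exists_eq_ciSup_of_finite (f := fun p => X p i * X p i)
    rw [hdiag i] at hp
    refine ⟨p, ?_⟩
    have h2 : (X p i - 1) * (X p i + 1) = 0 := by nlinarith
    rcases mul_eq_zero.1 h2 with h | h
    · linarith
    · have := hX0 p i; linarith
  choose σ hσ using hcol
  have hinj : Function.Injective σ := by
    intro i j hij
    by_contra hne
    have := hoff i j hne (σ i)
    rw [hσ i, hij, hσ j] at this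
    norm_num at this
  have hsurj : Function.Surjective σ := Finite.injective_iff_surjective.1 hinj
  have hzero : ∀ p i, p ≠ σ i → X p i = 0 := by
    intro p i hp
    obtain ⟨j, hj⟩ := hsurj p
    have hji : j ≠ i := fun h => hp (by rw [← hj, h])
    have h1 : X p j = 1 := by rw [← hj]; exact hσ j
    have := hoff i j (Ne.symm hji) p
    rw [h1, mul_one] at this
    exact this
  have hXC : ∀ i q, (maxMul Xᵀ C) i q = C (σ i) q := by
    intro i q
    apply le_antisymm
    · apply ciSup_le
      intro p
      simp only [transpose_apply]
      by_cases hp : p = σ i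
      · rw [hp, hσ i, one_mul]
      · rw [hzero p i hp, zero_mul]; exact hC _ _
    · have := le_ciSup (Finite.bddAbove_range fun p => Xᵀ i p * C p q) (σ i)
      simpa [maxMul, transpose_apply, hσ i] using this
  have hdiag2 : ∀ i, (maxMul (maxMul Xᵀ C) X) i i = C (σ i) (σ i) := by
    intro i
    show (⨆ q, (maxMul Xᵀ C) i q * X q i) = _
    apply le_antisymm
    · apply ciSup_le
      intro q
      rw [hXC i q]
      by_cases hq : q = σ i
      · rw [hq, hσ i, mul_one]
      · rw [hzero q i hq, mul_zero]; exact hC _ _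
    · have := le_ciSup (Finite.bddAbove_range fun q => (maxMul Xᵀ C) i q * X q i) (σ i)
      rw [hXC i (σ i), hσ i, mul_one] at this
      exact this
  unfold trMax
  simp only [hdiag2]
  apply le_antisymm
  · exact ciSup_le fun i => le_ciSup (Finite.bddAbove_range fun i => C i i) (σ i)
  · apply ciSup_le
    intro i
    obtain ⟨j, hj⟩ := hsurj i
    rw [← hj]
    exact le_ciSup (Finite.bddAbove_range fun i => C (σ i) (σ i)) j

lemma one_mem_Xset {n : ℕ} (hn : 0 < n) : (1 : Matrix (Fin n) (Fin n) ℝ) ∈ Xset n n := by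
  haveI : Nonempty (Fin n) := ⟨⟨0, hn⟩⟩
  constructor
  · intro i j
    rw [Matrix.one_apply]
    split <;> norm_num
  · ext i j
    simp only [maxMul, of_apply, transpose_apply]
    rw [Matrix.one_apply]
    by_cases hij : i = j
    · subst hij
      simp only [if_pos rfl]
      apply le_antisymm
      · apply ciSup_le
        intro p
        rw [Matrix.one_apply]
        split <;> simp
      · have := le_ciSup (Finite.bddAbove_range fun p => (1 : Matrix (Fin n) (Fin n) ℝ) p i * (1 : Matrix (Fin n) (Fin n) ℝ) p i) i
        simpa [Matrix.one_apply] using this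
    · simp only [if_neg hij]
      have : ∀ p, (1 : Matrix (Fin n) (Fin n) ℝ) p i * (1 : Matrix (Fin n) (Fin n) ℝ) p j = 0 := by
        intro p
        rw [Matrix.one_apply, Matrix.one_apply]
        split <;> split <;> simp_all
      simp only [this, ciSup_const]

theorem stmt_7 {n k : ℕ} (hk : 1 ≤ k) (hkn : k ≤ n)
    (A B : Matrix (Fin n) (Fin n) ℝ)
    (hA : ∀ i j, 0 ≤ A i j) (hB : ∀ i j, 0 ≤ B i j) :
    (Wmax k (Matrix.of fun i j => max (A i j) (B i j)) ⊆
      {z | ∃ s ∈ Wmax k A, ∃ t ∈ Wmax k B, z = max s t}) ∧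
    (Wmax n (Matrix.of fun i j => max (A i j) (B i j)) =
      {z | ∃ s ∈ Wmax n A, ∃ t ∈ Wmax n B, z = max s t}) := by
  have hn : 0 < n := hk.trans hkn
  haveI : Nonempty (Fin n) := ⟨⟨0, hn⟩⟩
  have sub : ∀ m : ℕ, 0 < m → m ≤ n →
      Wmax m (Matrix.of fun i j => max (A i j) (B i j)) ⊆
      {z | ∃ s ∈ Wmax m A, ∃ t ∈ Wmax m B, z = max s t} := by
    intro m hm _ z hz
    obtain ⟨X, hXmem, hzeq⟩ := hz
    refine ⟨trMax (maxMul (maxMul Xᵀ A) X), ⟨X, hXmem, rfl⟩,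
      trMax (maxMul (maxMul Xᵀ B) X), ⟨X, hXmem, rfl⟩, ?_⟩
    rw [hzeq, tval_max hn hm X hXmem.1 A B]
  refine ⟨sub k hk hkn, ?_⟩
  apply Set.Subset.antisymm (sub n hn le_rfl)
  intro z hz
  obtain ⟨s, ⟨X, hXmem, hs⟩, t, ⟨Y, hYmem, ht⟩, hz⟩ := hz
  have hAB : ∀ i j, (0:ℝ) ≤ max (A i j) (B i j) := fun i j =>
    le_trans (hA i j) (le_max_left _ _)
  refine ⟨1, one_mem_Xset hn, ?_⟩
  have e1 := tval_perm hn (1 : Matrix (Fin n) (Fin n) ℝ) (one_mem_Xset hn)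
    (Matrix.of fun i j => max (A i j) (B i j)) hAB
  have e2 : max (trMax A) (trMax B)
      = trMax (Matrix.of fun i j => max (A i j) (B i j)) := by
    unfold trMax
    rw [← ciSup_max']
    rfl
  rw [hz, hs, ht, tval_perm hn X hXmem A hA, tval_perm hn Y hYmem B hB]
  exact e2.trans e1.symm
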